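/- Under the hypotheses of the previous statement, and assuming additionally 1 ∈ S, the sum of the computed weights satisfies ∑_{j=1}^m w_j ≤ μ(X) + ε √(μ(X)), where μ(X) = ∑_i λ_i. -/
import Mathlib


/-- If moreover the constant function `1` belongs to `S`, the sum of the
computed weights satisfies `∑ w_j ≤ μ(X) + ε √(μ(X))`. -/
theorem catch_weights_sum_residual
    (M N : ℕ) (lam : Fin M → ℝ) (hlam : ∀ i, 0 < lam i)
    (ψ : Fin N → (Fin M → ℝ))
    (horth : ∀ j k, ∑ i, lam i * ψ j i * ψ k i = if j = k then 1 else 0)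
    (u : Fin M → ℝ) (hu : ∀ i, 0 ≤ u i) (ε : ℝ)
    (hres : Real.sqrt (∑ k, (∑ i, u i * ψ k i - ∑ i, lam i * ψ k i) ^ 2) = ε)
    (hone : (fun _ => (1 : ℝ)) ∈ Submodule.span ℝ (Set.range ψ)) :
    ∑ i, u i ≤ ∑ i, lam i + ε * Real.sqrt (∑ i, lam i) := by
  obtain ⟨c, hc⟩ := (Submodule.mem_span_range_iff_exists_fun ℝ).1 hone
  have hc' : ∀ i, ∑ k, c k * ψ k i = 1 := by
    intro i
    have := congrFun hc i
    simpa [Finset.sum_apply] using this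
  -- swap-sum lemma
  have hswap : ∀ v : Fin M → ℝ,
      ∑ k, c k * ∑ i, v i * ψ k i = ∑ i, v i := by
    intro v
    calc ∑ k, c k * ∑ i, v i * ψ k i
        = ∑ k, ∑ i, c k * (v i * ψ k i) := by simp [Finset.mul_sum]
      _ = ∑ i, ∑ k, c k * (v i * ψ k i) := Finset.sum_comm
      _ = ∑ i, v i * ∑ k, c k * ψ k i := by
          refine Finset.sum_congr rfl fun i _ => ?_
          rw [Finset.mul_sum]
          exact Finset.sum_congr rfl fun k _ => by ring
      _ = ∑ i, v i := by simp [hc']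
  -- norm of the coefficient vector
  have hB : ∑ k, (c k) ^ 2 = ∑ i, lam i := by
    have expand : ∀ i, ∑ j, ∑ k, c j * c k * (lam i * ψ j i * ψ k i) = lam i := by
      intro i
      calc ∑ j, ∑ k, c j * c k * (lam i * ψ j i * ψ k i)
          = ∑ j, (c j * ψ j i * lam i) * ∑ k, c k * ψ k i := by
            refine Finset.sum_congr rfl fun j _ => ?_
            rw [Finset.mul_sum]
            exact Finset.sum_congr rfl fun k _ => by ring
        _ = ∑ j, c j * ψ j i * lam i := by simp [hc']
        _ = lam i * ∑ j, c j * ψ j i := by rw [Finset.mul_sum]; exact Finset.sum_congr rfl fun j _ => by ring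
        _ = lam i := by rw [hc' i, mul_one]
    calc ∑ k, (c k) ^ 2
        = ∑ j, ∑ k, c j * c k * (if j = k then (1:ℝ) else 0) := by
          simp [Finset.sum_ite_eq, sq]
      _ = ∑ j, ∑ k, c j * c k * ∑ i, lam i * ψ j i * ψ k i := by
          simp_rw [horth]
      _ = ∑ j, ∑ k, ∑ i, c j * c k * (lam i * ψ j i * ψ k i) := by
          simp [Finset.mul_sum]
      _ = ∑ i, ∑ j, ∑ k, c j * c k * (lam i * ψ j i * ψ k i) := by
          calc ∑ j, ∑ k, ∑ i, c j * c k * (lam i * ψ j i * ψ k i)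
              = ∑ j, ∑ i, ∑ k, c j * c k * (lam i * ψ j i * ψ k i) :=
                Finset.sum_congr rfl fun j _ => Finset.sum_comm
            _ = ∑ i, ∑ j, ∑ k, c j * c k * (lam i * ψ j i * ψ k i) :=
                Finset.sum_comm
      _ = ∑ i, lam i := Finset.sum_congr rfl fun i _ => expand i
  -- the key identity
  have hA : ∑ i, u i - ∑ i, lam i
      = ∑ k, c k * (∑ i, u i * ψ k i - ∑ i, lam i * ψ k i) := by
    simp_rw [mul_sub]
    rw [Finset.sum_sub_distrib, hswap u, hswap lam]
  have hε : 0 ≤ ε := hres ▸ Real.sqrt_nonneg _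
  have hCS := Real.sum_mul_le_sqrt_mul_sqrt Finset.univ c
    (fun k => ∑ i, u i * ψ k i - ∑ i, lam i * ψ k i)
  rw [hres] at hCS
  have hsq : Real.sqrt (∑ k, (c k) ^ 2) = Real.sqrt (∑ i, lam i) := by rw [hB]
  rw [hsq] at hCS
  have := hA ▸ hCS
  linarith [this]
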